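/- Let τ > 0 and let φ : ℝ → ℝ be a differentiable function with φ(s) > 0 for all s satisfying φ'(s)² + (φ(s)² − τ)² = φ(s)² for all s ∈ ℝ. Define ζ(s) := φ(s) + τ/φ(s). Then for every s ∈ ℝ one has ζ'(s)² = (ζ(s)² − 4τ)(1 + 4τ − ζ(s)²), and moreover ζ(s)² ≤ 1 + 4τ. -/

import Mathlib

open Real

/-- For a positive solution `φ` of the Delaunay nodoid profile ODE
`φ'² + (φ² − τ)² = φ²`, the auxiliary function `ζ = φ + τ/φ` satisfies
`ζ'² = (ζ² − 4τ)(1 + 4τ − ζ²)` and `ζ² ≤ 1 + 4τ`. -/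
theorem delaunay_zeta_first_order (τ : ℝ) (hτ : 0 < τ) (φ : ℝ → ℝ)
    (hdiff : Differentiable ℝ φ) (hpos : ∀ s, 0 < φ s)
    (hode : ∀ s, (deriv φ s) ^ 2 + (φ s ^ 2 - τ) ^ 2 = φ s ^ 2) :
    ∀ s : ℝ,
      (deriv (fun t => φ t + τ / φ t) s) ^ 2
          = ((φ s + τ / φ s) ^ 2 - 4 * τ) * (1 + 4 * τ - (φ s + τ / φ s) ^ 2)
        ∧ (φ s + τ / φ s) ^ 2 ≤ 1 + 4 * τ := by
  intro s
  have hφ := hpos s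
  have hφne : φ s ≠ 0 := ne_of_gt hφ
  have hd : HasDerivAt φ (deriv φ s) s := (hdiff s).hasDerivAt
  have hz : HasDerivAt (fun t => φ t + τ / φ t)
      (deriv φ s + -(τ * deriv φ s) / φ s ^ 2) s := by
    have h2 : HasDerivAt (fun t => τ / φ t)
        (-(τ * deriv φ s) / φ s ^ 2) s := by
      have := (hasDerivAt_const s τ).fun_div hd hφne
      convert this using 1 <;> try rfl
      ring
    exact hd.add h2
  have hzd : deriv (fun t => φ t + τ / φ t) s
      = deriv φ s + -(τ * deriv φ s) / φ s ^ 2 := hz.deriv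
  have ho := hode s
  constructor
  · rw [hzd]
    have h4 : φ s ^ 2 ≠ 0 := pow_ne_zero 2 hφne
    field_simp
    linear_combination (φ s ^ 2 - τ) ^ 2 * ho
  · have key : 1 + 4 * τ - (φ s + τ / φ s) ^ 2 = (deriv φ s) ^ 2 / φ s ^ 2 := by
      field_simp
      nlinarith [ho]
    nlinarith [sq_nonneg (deriv φ s / φ s), key, sq_nonneg (deriv φ s), sq_nonneg (φ s), div_nonneg (sq_nonneg (deriv φ s)) (sq_nonneg (φ s))]
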